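/- Every point z ∈ X̄ is of big type or of leaf type. -/

import Mathlib

open MvPolynomial

noncomputable section

/-- Index type for the variables `T i j` (`Sum.inl ⟨i, j⟩`) and `S k` (`Sum.inr k`). -/
abbrev VarIdx (r m : ℕ) (nn : Fin (r + 1) → ℕ) : Type :=
  (Σ i : Fin (r + 1), Fin (nn i)) ⊕ Fin m

variable (𝕂 : Type) [Field 𝕂]

/-- The monomial `T_i^{l_i} = ∏_j T_{ij}^{l_{ij}}`. -/
def Tmon (r m : ℕ) (nn : Fin (r + 1) → ℕ)
    (l : ∀ i : Fin (r + 1), Fin (nn i) → ℕ) (i : Fin (r + 1)) :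
    MvPolynomial (VarIdx r m nn) 𝕂 :=
  ∏ j : Fin (nn i), (X (Sum.inl ⟨i, j⟩) : MvPolynomial (VarIdx r m nn) 𝕂) ^ l i j

/-- The map sending a column index of the `(c+2)×(c+2)` matrix defining `g_t`
to the corresponding column index of `A`, namely `0, …, c, c + (t+1)`. -/
def colOf (r c : ℕ) (hcr : c ≤ r) (t : Fin (r - c)) (p : Fin (c + 2)) : Fin (r + 1) :=
  if h : (p : ℕ) ≤ c then ⟨p, by omega⟩
  else ⟨c + 1 + t, by have := t.isLt; omega⟩

/-- The polynomial `g_t`: the determinant of the `(c+2)×(c+2)` matrix whose first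
`c+1` rows are formed by the columns `a_0, …, a_c, a_{c+t}` of `A` (as constant
polynomials) and whose last row is `(T_0^{l_0}, …, T_c^{l_c}, T_{c+t}^{l_{c+t}})`. -/
def gPoly (r c m : ℕ) (hcr : c ≤ r) (nn : Fin (r + 1) → ℕ)
    (l : ∀ i : Fin (r + 1), Fin (nn i) → ℕ)
    (A : Matrix (Fin (c + 1)) (Fin (r + 1)) 𝕂) (t : Fin (r - c)) :
    MvPolynomial (VarIdx r m nn) 𝕂 :=
  Matrix.det (Matrix.of fun q p : Fin (c + 2) =>
    if h : (q : ℕ) < c + 1 then C (A ⟨q, h⟩ (colOf r c hcr t p))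
    else Tmon 𝕂 r m nn l (colOf r c hcr t p))

/-- The ring `R = 𝕂[T_{ij}, S_k] / ⟨g_1, …, g_{r-c}⟩`. -/
abbrev RingAP (r c m : ℕ) (hcr : c ≤ r) (nn : Fin (r + 1) → ℕ)
    (l : ∀ i : Fin (r + 1), Fin (nn i) → ℕ)
    (A : Matrix (Fin (c + 1)) (Fin (r + 1)) 𝕂) : Type :=
  MvPolynomial (VarIdx r m nn) 𝕂 ⧸ Ideal.span (Set.range (gPoly 𝕂 r c m hcr nn l A))

end

noncomputable section
variable (𝕂 : Type) [Field 𝕂]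

/-- A point `z ∈ 𝕂^{n+m}` is of big type if for every `i = 0,…,r` some
coordinate `z_{ij}` vanishes. -/
def BigType (r m : ℕ) (nn : Fin (r + 1) → ℕ) (z : VarIdx r m nn → 𝕂) : Prop :=
  ∀ i : Fin (r + 1), ∃ j : Fin (nn i), z (Sum.inl ⟨i, j⟩) = 0

/-- A point `z ∈ 𝕂^{n+m}` is of leaf type if there is a set `I ⊆ {0,…,r}` with at most
`c` elements such that `z_{ij} = 0` implies `i ∈ I`. -/
def LeafType (r c m : ℕ) (nn : Fin (r + 1) → ℕ) (z : VarIdx r m nn → 𝕂) : Prop :=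
  ∃ I : Finset (Fin (r + 1)), I.card ≤ c ∧
    ∀ (i : Fin (r + 1)) (j : Fin (nn i)), z (Sum.inl ⟨i, j⟩) = 0 → i ∈ I

/-- The Jacobian matrix of `g_1, …, g_{r-c}` evaluated at the point `z`. -/
def Jac (r c m : ℕ) (hcr : c ≤ r) (nn : Fin (r + 1) → ℕ)
    (l : ∀ i : Fin (r + 1), Fin (nn i) → ℕ)
    (A : Matrix (Fin (c + 1)) (Fin (r + 1)) 𝕂) (z : VarIdx r m nn → 𝕂) :
    Matrix (Fin (r - c)) (VarIdx r m nn) 𝕂 :=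
  Matrix.of fun t v =>
    MvPolynomial.eval z (MvPolynomial.pderiv v (gPoly 𝕂 r c m hcr nn l A t))

end

set_option maxHeartbeats 4000000 in
/-- Every point `z ∈ X̄` (common zero set of `g_1,…,g_{r−c}`) is of
big type or of leaf type. -/
theorem statement_12
    (𝕂 : Type) [Field 𝕂] [IsAlgClosed 𝕂] [CharZero 𝕂]
    (r c m : ℕ) (hc : 0 < c) (hcr : c ≤ r)
    (nn : Fin (r + 1) → ℕ) (hnn : ∀ i, 0 < nn i)
    (l : ∀ i : Fin (r + 1), Fin (nn i) → ℕ) (hl : ∀ i j, 0 < l i j)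
    (A : Matrix (Fin (c + 1)) (Fin (r + 1)) 𝕂)
    (hA : ∀ s : Finset (Fin (r + 1)), s.card = c + 1 →
      LinearIndependent 𝕂 fun j : s => A.transpose (j : Fin (r + 1)))
    (z : VarIdx r m nn → 𝕂)
    (hz : ∀ t : Fin (r - c), MvPolynomial.eval z (gPoly 𝕂 r c m hcr nn l A t) = 0) :
    BigType 𝕂 r m nn z ∨ LeafType 𝕂 r c m nn z := by
  classical
  set w : Fin (r + 1) → 𝕂 := fun i => ∏ j : Fin (nn i), z (Sum.inl ⟨i, j⟩) ^ l i j with hw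
  have hw0 : ∀ i : Fin (r + 1), w i = 0 ↔ ∃ j : Fin (nn i), z (Sum.inl ⟨i, j⟩) = 0 := by
    intro i
    simp only [hw]
    rw [Finset.prod_eq_zero_iff]
    constructor
    · rintro ⟨j, -, hj⟩
      exact ⟨j, by simpa [pow_eq_zero_iff (hl i j).ne'] using hj⟩
    · rintro ⟨j, hj⟩
      exact ⟨j, Finset.mem_univ _, by simp [hj, zero_pow (hl i j).ne']⟩
  have hTmon : ∀ i, MvPolynomial.eval z (Tmon 𝕂 r m nn l i) = w i := by
    intro i
    simp [Tmon, hw]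
  set last : Fin (c + 2) := ⟨c + 1, by omega⟩ with hlast
  set ext : Fin (r + 1) → Fin (c + 2) → 𝕂 :=
    fun i p => if h : (p : ℕ) < c + 1 then A ⟨p, h⟩ i else w i with hext
  have hext1 : ∀ (i : Fin (r + 1)) (q : Fin (c + 1)),
      ext i (Fin.castSucc q) = A q i := by
    intro i q
    simp only [hext]
    rw [dif_pos (by simpa using q.isLt)]
    congr 1
  have hext2 : ∀ i : Fin (r + 1), ext i last = w i := by
    intro i
    simp only [hext, hlast]
    rw [dif_neg (by simp)]
  set N : Matrix (Fin (c + 2)) (Fin (c + 2)) 𝕂 :=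
    Matrix.of (fun q p => if h : (q : ℕ) < c + 1 then ext ⟨q, by omega⟩ p else 0) with hN
  set φ : (Fin (c + 2) → 𝕂) →ₗ[𝕂] 𝕂 :=
    { toFun := fun v => (N.updateRow last v).det
      map_add' := fun u v => Matrix.det_updateRow_add N last u v
      map_smul' := fun a v => Matrix.det_updateRow_smul N last a v } with hφ
  have hφ_apply : ∀ v, φ v = (N.updateRow last v).det := fun _ => rfl
  have hrow : ∀ (v : Fin (c + 2) → 𝕂) (q : Fin (c + 2)) (h : (q : ℕ) < c + 1),
      N.updateRow last v q = ext ⟨q, by omega⟩ := by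
    intro v q h
    rw [Matrix.updateRow_ne (by
      intro hq
      rw [hq, hlast] at h
      simp at h)]
    funext p
    simp only [hN, Matrix.of_apply]
    rw [dif_pos h]
  have key : ∀ i : Fin (r + 1), φ (ext i) = 0 := by
    intro i
    rcases lt_or_ge (i : ℕ) (c + 1) with hi | hi
    · rw [hφ_apply]
      refine Matrix.det_zero_of_row_eq (M := N.updateRow last (ext i))
        (i := (⟨i, by omega⟩ : Fin (c + 2))) (j := last) ?_ ?_
      · intro hcon
        have := congrArg Fin.val hcon
        simp only [hlast] at this
        omega
      · rw [hrow _ _ (by simpa using hi), Matrix.updateRow_self]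
    · set t : Fin (r - c) := ⟨(i : ℕ) - (c + 1), by omega⟩ with ht
      have hcol : ∀ p : Fin (c + 2), (p : ℕ) < c + 1 →
          colOf r c hcr t p = ⟨p, by omega⟩ := by
        intro p hp
        simp only [colOf]
        rw [dif_pos (by omega)]
      have hcol2 : colOf r c hcr t last = i := by
        unfold colOf
        rw [dif_neg (by simp only [hlast]; omega)]
        refine Fin.ext ?_
        simp only [ht, hlast]
        omega
      have heval := hz t
      rw [gPoly, ← RingHom.coe_coe (MvPolynomial.eval z), RingHom.map_det] at heval
      set B : Matrix (Fin (c + 2)) (Fin (c + 2)) 𝕂 :=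
        (MvPolynomial.eval z : MvPolynomial (VarIdx r m nn) 𝕂 →+* 𝕂).mapMatrix
          (Matrix.of fun (q p : Fin (c + 2)) =>
            if h : (q : ℕ) < c + 1 then MvPolynomial.C (A ⟨q, h⟩ (colOf r c hcr t p))
            else Tmon 𝕂 r m nn l (colOf r c hcr t p)) with hB
      have hBT : B.transpose = N.updateRow last (ext i) := by
        funext q p
        rw [Matrix.transpose_apply]
        simp only [hB, RingHom.mapMatrix_apply, Matrix.map_apply, Matrix.of_apply]
        rcases lt_or_ge (q : ℕ) (c + 1) with hq | hq
        · rw [hrow _ _ hq, hcol q hq]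
          rcases lt_or_ge (p : ℕ) (c + 1) with hp | hp
          · rw [dif_pos hp]
            simp only [hext, MvPolynomial.eval_C, RingHom.coe_coe]
            rw [dif_pos hp]
          · rw [dif_neg (by omega)]
            simp only [hext, RingHom.coe_coe]
            rw [dif_neg (by omega), hTmon]
        · have hq' : q = last := Fin.ext (by simp only [hlast]; omega)
          subst hq'
          rw [Matrix.updateRow_self, hcol2]
          rcases lt_or_ge (p : ℕ) (c + 1) with hp | hp
          · rw [dif_pos hp]
            simp only [hext, MvPolynomial.eval_C, RingHom.coe_coe]
            rw [dif_pos hp]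
          · rw [dif_neg (by omega)]
            simp only [hext, RingHom.coe_coe]
            rw [dif_neg (by omega), hTmon]
      rw [hφ_apply, ← hBT, Matrix.det_transpose]
      exact heval
  set lam : Fin (c + 1) → 𝕂 :=
    fun q => φ (fun p => if Fin.castSucc q = p then 1 else 0) with hlam
  set μ : 𝕂 := φ (fun p => if last = p then 1 else 0) with hμ
  have hlast' : Fin.last (c + 1) = last := Fin.ext (by simp only [hlast, Fin.val_last])
  have hrel : ∀ i : Fin (r + 1), (∑ q : Fin (c + 1), A q i * lam q) + w i * μ = 0 := by
    intro i
    have h1 := (LinearMap.pi_apply_eq_sum_univ φ (ext i)).symm.trans (key i)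
    rw [Fin.sum_univ_castSucc, hlast'] at h1
    calc (∑ q : Fin (c + 1), A q i * lam q) + w i * μ
        = (∑ q : Fin (c + 1), ext i (Fin.castSucc q) •
            φ (fun p => if Fin.castSucc q = p then 1 else 0)) +
          ext i last • φ (fun p => if last = p then 1 else 0) := by
          rw [hext2]
          congr 1
          exact Finset.sum_congr rfl fun q _ => by rw [hext1, smul_eq_mul, hlam]
      _ = 0 := h1
  have hμ0 : μ ≠ 0 := by
    set M' : Matrix (Fin (c + 1)) (Fin (c + 1)) 𝕂 :=
      Matrix.of (fun q p => A p (Fin.castLE (by omega) q)) with hM'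
    have hM'det : μ = M'.det := by
      rw [hμ, hφ_apply, Matrix.det_succ_row _ (Fin.last (c + 1))]
      rw [Finset.sum_eq_single (Fin.last (c + 1))]
      · rw [hlast', Matrix.updateRow_self, if_pos rfl]
        have hsub : ((N.updateRow last fun p => if last = p then 1 else 0).submatrix
            last.succAbove last.succAbove) = M' := by
          funext q p
          have h1 : ((Fin.castSucc q : Fin (c + 2)) : ℕ) < c + 1 := by have := q.isLt; simp; omega
          have h2 : last.succAbove = Fin.castSucc := by
            rw [← hlast']; exact Fin.succAbove_last
          rw [Matrix.submatrix_apply, h2, hrow _ _ h1, hext1]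
          simp only [hM', Matrix.of_apply]
          congr 1
        rw [hsub]
        have hsign : ((-1 : 𝕂) ^ ((last : ℕ) + (last : ℕ))) = 1 :=
          Even.neg_one_pow ⟨c + 1, by simp [hlast]⟩
        rw [hsign, one_mul, one_mul]
      · intro j _ hj
        rw [hlast', Matrix.updateRow_self, if_neg (by rw [← hlast']; exact fun h => hj h.symm)]
        ring
      · intro h
        exact absurd (Finset.mem_univ _) h
    have hcard : (Finset.univ.map
        ⟨Fin.castLE (by omega : c + 1 ≤ r + 1), Fin.castLE_injective _⟩ :
        Finset (Fin (r + 1))).card = c + 1 := by simp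
    have hli0 := hA _ hcard
    have hli : LinearIndependent 𝕂 (fun q : Fin (c + 1) => M' q) := by
      have := hli0.comp
        (fun q : Fin (c + 1) =>
          (⟨Fin.castLE (by omega) q, Finset.mem_map_of_mem _ (Finset.mem_univ q)⟩ :
            {x // x ∈ (Finset.univ.map
              ⟨Fin.castLE (by omega : c + 1 ≤ r + 1), Fin.castLE_injective _⟩ :
              Finset (Fin (r + 1)))}))
        (fun a b hab => Fin.castLE_injective (show c + 1 ≤ r + 1 by omega) (by simpa using congrArg Subtype.val hab))
      exact this
    have hunit := Matrix.linearIndependent_rows_iff_isUnit.mp hli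
    rw [hM'det]
    exact ((Matrix.isUnit_iff_isUnit_det _).mp hunit).ne_zero
  by_cases hlam0 : lam = 0
  · left
    intro i
    refine (hw0 i).mp ?_
    have h1 := hrel i
    rw [hlam0] at h1
    simp only [Pi.zero_apply, mul_zero, Finset.sum_const_zero, zero_add] at h1
    exact (mul_eq_zero.mp h1).resolve_right hμ0
  · right
    refine ⟨Finset.univ.filter (fun i => w i = 0), ?_, ?_⟩
    · by_contra hcard
      push_neg at hcard
      obtain ⟨s, hs_sub, hs_card⟩ := Finset.exists_subset_card_eq hcard
      have hA' := hA s hs_card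
      set e : Fin (c + 1) ≃ {x // x ∈ s} := (s.equivFinOfCardEq hs_card).symm with he
      set Cm : Matrix (Fin (c + 1)) (Fin (c + 1)) 𝕂 :=
        Matrix.of (fun q p => A q ((e p : Fin (r + 1)))) with hCm
      have hli : LinearIndependent 𝕂 (fun p : Fin (c + 1) => Cm.transpose p) := by
        have := hA'.comp e e.injective
        exact this
      have hunit := Matrix.linearIndependent_cols_iff_isUnit.mp hli
      have hinj := Matrix.vecMul_injective_iff_isUnit.mpr hunit
      have hvm : Matrix.vecMul lam Cm = Matrix.vecMul 0 Cm := by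
        rw [Matrix.zero_vecMul]
        funext p
        simp only [Matrix.vecMul, dotProduct, hCm, Matrix.of_apply, Pi.zero_apply]
        have hw_ep : w ((e p : Fin (r + 1))) = 0 := by
          have hmem := hs_sub (e p).2
          simpa using hmem
        have h1 := hrel ((e p : Fin (r + 1)))
        rw [hw_ep, zero_mul, add_zero] at h1
        rw [← h1]
        exact Finset.sum_congr rfl fun q _ => mul_comm _ _
      have : lam = 0 := hinj hvm
      exact hlam0 this
    · intro i j hzij
      simp only [Finset.mem_filter, Finset.mem_univ, true_and]
      exact (hw0 i).mpr ⟨j, hzij⟩
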